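/- For π, ρ ∈ NC(n), the meandric system M_{π,ρ} is irreducible (i.e., no proper subinterval of {1,...,2n} is invariant under M_{π,ρ}) if and only if A(π) ∨ A(ρ) = 1_{2n}, where the join is taken in the lattice NC(2n). -/
import Mathlib


open scoped Classical

/-- A setoid (partition) of `Fin n` is non-crossing if there is no crossing
`a < b < c < d` with `a ∼ c`, `b ∼ d` but `a` and `b` in distinct blocks. -/
def IsNC {n : ℕ} (S : Setoid (Fin n)) : Prop :=
  ∀ a b c d : Fin n, a < b → b < c → c < d → S.r a c → S.r b d → S.r a b

/-- A partition is a pairing if every block has exactly two elements. -/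
def IsPairing {m : ℕ} (T : Setoid (Fin m)) : Prop :=
  ∀ x : Fin m, ∃ y : Fin m, y ≠ x ∧ T.r x y ∧ ∀ z : Fin m, T.r x z → z = x ∨ z = y

/-- The block of `i` in the partition `S`, as a finset. -/
noncomputable def blockOf {n : ℕ} (S : Setoid (Fin n)) (i : Fin n) : Finset (Fin n) :=
  Finset.univ.filter (fun j => S.r i j)

lemma blockOf_nonempty {n : ℕ} (S : Setoid (Fin n)) (i : Fin n) :
    (blockOf S i).Nonempty :=
  ⟨i, by simp [blockOf, S.iseqv.refl i]⟩

/-- The permutation `P_S` which performs an increasing cycle on every block of `S`: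
it sends `i` to the next larger element of its block, or to the minimum of the
block if `i` is the largest element of its block. -/
noncomputable def nextP {n : ℕ} (S : Setoid (Fin n)) (i : Fin n) : Fin n :=
  if h : ((blockOf S i).filter (fun j => i < j)).Nonempty
  then ((blockOf S i).filter (fun j => i < j)).min' h
  else (blockOf S i).min' (blockOf_nonempty S i)

/-- The inverse permutation `P_S⁻¹` (decreasing cycle on every block of `S`). -/
noncomputable def prevP {n : ℕ} (S : Setoid (Fin n)) (i : Fin n) : Fin n :=
  if h : ((blockOf S i).filter (fun j => j < i)).Nonempty
  then ((blockOf S i).filter (fun j => j < i)).max' h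
  else (blockOf S i).max' (blockOf_nonempty S i)

/-- `0`-indexed version of the point `2i-1` of `{1,…,2n}`. -/
def dEven {n : ℕ} (j : Fin n) : Fin (2*n) := ⟨2*j.val, by have := j.isLt; omega⟩

/-- `0`-indexed version of the point `2i` of `{1,…,2n}`. -/
def dOdd {n : ℕ} (j : Fin n) : Fin (2*n) := ⟨2*j.val+1, by have := j.isLt; omega⟩

/-- The doubling construction `π ↦ A(π)`: the pairing of `{1,…,2n}` generated by
pairing each point `2i` with `2P_π(i) - 1`, so that the associated permutation
satisfies `P_{A(π)}(2i) = 2P_π(i) - 1` and `P_{A(π)}(2i-1) = 2P_π⁻¹(i)`. -/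
noncomputable def archSetoid {n : ℕ} (S : Setoid (Fin n)) : Setoid (Fin (2*n)) :=
  Relation.EqvGen.setoid (fun a b => ∃ j : Fin n, a = dOdd j ∧ b = dEven (nextP S j))

/-- The meandric system permutation `M_{π,ρ} ∈ S_{2n}`, defined by
`M_{π,ρ}(2i-1) = 2P_π⁻¹(i)` and `M_{π,ρ}(2i) = 2P_ρ(i) - 1` (here `0`-indexed). -/
noncomputable def meanderMap {n : ℕ} (π ρ : Setoid (Fin n)) (x : Fin (2*n)) : Fin (2*n) :=
  if x.val % 2 = 0
  then dOdd (prevP π ⟨x.val / 2, by have := x.isLt; omega⟩)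
  else dEven (nextP ρ ⟨x.val / 2, by have := x.isLt; omega⟩)

/-- The orbit partition of a map. -/
def orbitSetoid {m : ℕ} (f : Fin m → Fin m) : Setoid (Fin m) :=
  Relation.EqvGen.setoid (fun a b => f a = b)

/-- Number of orbits of a map. -/
noncomputable def numOrbits {m : ℕ} (f : Fin m → Fin m) : ℕ :=
  Nat.card (Quotient (orbitSetoid f))

/-- `S` is a union of blocks of the partition `T`. -/
def IsBlockUnion {m : ℕ} (T : Setoid (Fin m)) (S : Set (Fin m)) : Prop :=
  ∀ x ∈ S, ∀ y, T.r x y → y ∈ S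

/-- `S` is invariant under `f`. -/
def MInvariant {m : ℕ} (f : Fin m → Fin m) (S : Set (Fin m)) : Prop :=
  ∀ x ∈ S, f x ∈ S

/-- The meandric system `M_{π,ρ}` is reducible: some proper subinterval
`{a,…,b}` of `{1,…,2n}` is invariant under `M_{π,ρ}`. -/
noncomputable def Reducible {n : ℕ} (π ρ : Setoid (Fin n)) : Prop :=
  ∃ a b : Fin (2*n), a ≤ b ∧ b.val - a.val < 2*n - 1 ∧
    MInvariant (meanderMap π ρ) {x | a ≤ x ∧ x ≤ b}

/-- The join in the lattice of non-crossing partitions: the smallest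
non-crossing partition above both `π` and `ρ`. -/
noncomputable def ncJoin {m : ℕ} (π ρ : Setoid (Fin m)) : Setoid (Fin m) :=
  sInf {τ | IsNC τ ∧ π ≤ τ ∧ ρ ≤ τ}

/-- The moment-cumulant formula of free probability: `mom n` is the sum over all
non-crossing partitions of `{1,…,n}` of the products of cumulants `κ` indexed
by the block sizes.  This uniquely determines the free cumulants `κ n`, `n ≥ 1`,
of a sequence of moments. -/
def MomCum {F : Type*} [Field F] (mom κ : ℕ → F) : Prop :=
  ∀ n : ℕ, 0 < n →
    mom n = ∑ᶠ S ∈ {S : Setoid (Fin n) | IsNC S}, ∏ᶠ B ∈ Setoid.classes S, κ B.ncard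

/-- The number of irreducible meandric systems on `2k` bridges, described as the
number of pairs `(π,ρ) ∈ NC(k)²` with `π ∨ ρ = 1_k`, `π ∧ ρ = 0_k`. -/
noncomputable def mirr (k : ℕ) : ℕ :=
  Nat.card {pr : Setoid (Fin k) × Setoid (Fin k) //
    IsNC pr.1 ∧ IsNC pr.2 ∧ ncJoin pr.1 pr.2 = ⊤ ∧ pr.1 ⊓ pr.2 = ⊥}

/-- The number of pairs `(π,ρ) ∈ NC(n)²` whose meandric system `M_{π,ρ}` has
exactly `k` orbits (connected components). -/
noncomputable def mcount (n k : ℕ) : ℕ :=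
  Nat.card {pr : Setoid (Fin n) × Setoid (Fin n) //
    IsNC pr.1 ∧ IsNC pr.2 ∧ numOrbits (meanderMap pr.1 pr.2) = k}

/-- The number of meanders on `2n` bridges. -/
noncomputable def meanderNum (n : ℕ) : ℕ := mcount n 1
section Aux

variable {n : ℕ}

lemma mem_blockOf {S : Setoid (Fin n)} {i j : Fin n} : j ∈ blockOf S i ↔ S.r i j := by
  simp [blockOf]

lemma blockOf_eq {S : Setoid (Fin n)} {i j : Fin n} (h : S.r i j) :
    blockOf S i = blockOf S j := by
  ext k
  simp only [mem_blockOf]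
  exact ⟨fun hk => S.iseqv.trans (S.iseqv.symm h) hk, fun hk => S.iseqv.trans h hk⟩

lemma nextP_rel (S : Setoid (Fin n)) (i : Fin n) : S.r i (nextP S i) := by
  unfold nextP
  split
  · next h => exact mem_blockOf.mp (Finset.mem_of_mem_filter _ (Finset.min'_mem _ h))
  · exact mem_blockOf.mp (Finset.min'_mem _ _)

lemma prevP_rel (S : Setoid (Fin n)) (i : Fin n) : S.r i (prevP S i) := by
  unfold prevP
  split
  · next h => exact mem_blockOf.mp (Finset.mem_of_mem_filter _ (Finset.max'_mem _ h))
  · exact mem_blockOf.mp (Finset.max'_mem _ _)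

lemma prevP_nextP (S : Setoid (Fin n)) (i : Fin n) : prevP S (nextP S i) = i := by
  set j := nextP S i with hj
  have hrel : S.r i j := nextP_rel S i
  have hblk : blockOf S j = blockOf S i := (blockOf_eq hrel).symm
  unfold nextP at hj
  unfold prevP
  simp only [hblk]
  split_ifs at hj with h
  · -- j is the min of elements above i
    have hij : i < j := by
      have := Finset.min'_mem _ h
      rw [← hj] at this
      exact (Finset.mem_filter.mp this).2
    have hiG : i ∈ (blockOf S i).filter (fun k => k < j) := by
      refine Finset.mem_filter.mpr ⟨mem_blockOf.mpr (S.iseqv.refl i), hij⟩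
    have hGne : ((blockOf S i).filter (fun k => k < j)).Nonempty := ⟨i, hiG⟩
    rw [dif_pos hGne]
    apply le_antisymm
    · -- max ≤ i
      have hk := Finset.max'_mem _ hGne
      set k := ((blockOf S i).filter (fun k => k < j)).max' hGne with hkdef
      obtain ⟨hkb, hkj⟩ := Finset.mem_filter.mp hk
      by_contra hik
      push_neg at hik
      have : k ∈ (blockOf S i).filter (fun k => i < k) := Finset.mem_filter.mpr ⟨hkb, hik⟩
      have := Finset.min'_le _ _ this
      rw [← hj] at this
      exact absurd hkj (not_lt.mpr this)
    · exact Finset.le_max' _ _ hiG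
  · -- j is min of the whole block, i is the max
    have hmax : ∀ k ∈ blockOf S i, k ≤ i := by
      intro k hk
      by_contra hik
      push_neg at hik
      exact h ⟨k, Finset.mem_filter.mpr ⟨hk, hik⟩⟩
    have hGempty : ¬ ((blockOf S i).filter (fun k => k < j)).Nonempty := by
      rintro ⟨k, hk⟩
      obtain ⟨hkb, hkj⟩ := Finset.mem_filter.mp hk
      have : j ≤ k := by rw [hj]; exact Finset.min'_le _ _ hkb
      exact absurd hkj (not_lt.mpr this)
    rw [dif_neg hGempty]
    exact le_antisymm (hmax _ (Finset.max'_mem _ _))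
      (Finset.le_max' _ _ (mem_blockOf.mpr (S.iseqv.refl i)))

lemma nextP_prevP (S : Setoid (Fin n)) (i : Fin n) : nextP S (prevP S i) = i := by
  set j := prevP S i with hj
  have hrel : S.r i j := prevP_rel S i
  have hblk : blockOf S j = blockOf S i := (blockOf_eq hrel).symm
  unfold prevP at hj
  unfold nextP
  simp only [hblk]
  split_ifs at hj with h
  · have hij : j < i := by
      have := Finset.max'_mem _ h
      rw [← hj] at this
      exact (Finset.mem_filter.mp this).2
    have hiG : i ∈ (blockOf S i).filter (fun k => j < k) := by
      refine Finset.mem_filter.mpr ⟨mem_blockOf.mpr (S.iseqv.refl i), hij⟩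
    have hGne : ((blockOf S i).filter (fun k => j < k)).Nonempty := ⟨i, hiG⟩
    rw [dif_pos hGne]
    apply le_antisymm
    · exact Finset.min'_le _ _ hiG
    · have hk := Finset.min'_mem _ hGne
      set k := ((blockOf S i).filter (fun k => j < k)).min' hGne with hkdef
      obtain ⟨hkb, hkj⟩ := Finset.mem_filter.mp hk
      by_contra hik
      push_neg at hik
      have : k ∈ (blockOf S i).filter (fun k => k < i) := Finset.mem_filter.mpr ⟨hkb, hik⟩
      have := Finset.le_max' _ _ this
      rw [← hj] at this
      exact absurd hkj (not_lt.mpr this)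
  · have hmin : ∀ k ∈ blockOf S i, i ≤ k := by
      intro k hk
      by_contra hik
      push_neg at hik
      exact h ⟨k, Finset.mem_filter.mpr ⟨hk, hik⟩⟩
    have hGempty : ¬ ((blockOf S i).filter (fun k => j < k)).Nonempty := by
      rintro ⟨k, hk⟩
      obtain ⟨hkb, hkj⟩ := Finset.mem_filter.mp hk
      have : k ≤ j := by rw [hj]; exact Finset.le_max' _ _ hkb
      exact absurd hkj (not_lt.mpr this)
    rw [dif_neg hGempty]
    exact le_antisymm (Finset.min'_le _ _ (mem_blockOf.mpr (S.iseqv.refl i)))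
      (hmin _ (Finset.min'_mem _ _))

lemma nextP_injective (S : Setoid (Fin n)) : Function.Injective (nextP S) :=
  Function.LeftInverse.injective (prevP_nextP S)

lemma prevP_injective (S : Setoid (Fin n)) : Function.Injective (prevP S) :=
  Function.LeftInverse.injective (nextP_prevP S)

lemma meanderMap_injective (π ρ : Setoid (Fin n)) :
    Function.Injective (meanderMap π ρ) := by
  intro x y hxy
  unfold meanderMap at hxy
  have hx := x.isLt
  have hy := y.isLt
  split_ifs at hxy with h1 h2 h2
  · have := congrArg Fin.val hxy
    simp only [dOdd] at this
    have h3 : prevP π ⟨x.val / 2, by omega⟩ = prevP π ⟨y.val / 2, by omega⟩ := by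
      apply Fin.ext; omega
    have := prevP_injective π h3
    have := congrArg Fin.val this
    simp only at this
    apply Fin.ext; omega
  · have := congrArg Fin.val hxy
    simp only [dOdd, dEven] at this
    omega
  · have := congrArg Fin.val hxy
    simp only [dOdd, dEven] at this
    omega
  · have := congrArg Fin.val hxy
    simp only [dEven] at this
    have h3 : nextP ρ ⟨x.val / 2, by omega⟩ = nextP ρ ⟨y.val / 2, by omega⟩ := by
      apply Fin.ext; omega
    have := nextP_injective ρ h3
    have := congrArg Fin.val this
    simp only at this
    apply Fin.ext; omega

/-- Closure of an invariant set under preimages, by finiteness. -/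
lemma minv_rev {m : ℕ} {f : Fin m → Fin m} (hf : Function.Injective f)
    {S : Set (Fin m)} (hS : MInvariant f S) : ∀ x, f x ∈ S → x ∈ S := by
  classical
  intro x hx
  set T : Finset (Fin m) := Finset.univ.filter (· ∈ S) with hT
  have hsub : T.image f ⊆ T := by
    intro y hy
    obtain ⟨z, hz, rfl⟩ := Finset.mem_image.mp hy
    simp only [hT, Finset.mem_filter, Finset.mem_univ, true_and] at hz ⊢
    exact hS z hz
  have hcard : T.card ≤ (T.image f).card := by
    rw [Finset.card_image_of_injective _ hf]
  have heq : T.image f = T := Finset.eq_of_subset_of_card_le hsub hcard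
  have hfx : f x ∈ T := by
    simp only [hT, Finset.mem_filter, Finset.mem_univ, true_and]; exact hx
  rw [← heq] at hfx
  obtain ⟨z, hz, hzx⟩ := Finset.mem_image.mp hfx
  have : z = x := hf hzx
  subst this
  simpa only [hT, Finset.mem_filter, Finset.mem_univ, true_and] using hz

lemma dEven_val (j : Fin n) : (dEven j).val = 2 * j.val := rfl
lemma dOdd_val (j : Fin n) : (dOdd j).val = 2 * j.val + 1 := rfl

/-- One step of the meander map is realized in `archSetoid π ⊔ archSetoid ρ`:
any setoid above both relates `x` and `meanderMap π ρ x`. -/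
lemma rel_meanderMap {π ρ : Setoid (Fin n)} {τ : Setoid (Fin (2*n))}
    (h1 : archSetoid π ≤ τ) (h2 : archSetoid ρ ≤ τ) (x : Fin (2*n)) :
    τ.r x (meanderMap π ρ x) := by
  have hx := x.isLt
  unfold meanderMap
  split_ifs with h
  · -- x even: x = dEven i, image is dOdd (prevP π i), generator of archSetoid π
    set i : Fin n := ⟨x.val / 2, by omega⟩ with hi
    have hgen : (archSetoid π).r (dOdd (prevP π i)) (dEven (nextP π (prevP π i))) :=
      Relation.EqvGen.rel _ _ ⟨prevP π i, rfl, rfl⟩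
    rw [nextP_prevP] at hgen
    have hxe : dEven i = x := by
      apply Fin.ext
      simp only [dEven_val, hi]
      omega
    rw [hxe] at hgen
    exact τ.iseqv.symm (Setoid.le_def.mp h1 hgen)
  · -- x odd: x = dOdd i, image is dEven (nextP ρ i), generator of archSetoid ρ
    set i : Fin n := ⟨x.val / 2, by omega⟩ with hi
    have hgen : (archSetoid ρ).r (dOdd i) (dEven (nextP ρ i)) :=
      Relation.EqvGen.rel _ _ ⟨i, rfl, rfl⟩
    have hxo : dOdd i = x := by
      apply Fin.ext
      simp only [dOdd_val, hi]
      omega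
    rw [hxo] at hgen
    exact Setoid.le_def.mp h2 hgen

/-- The two-block setoid determined by a set. -/
def sideSetoid {m : ℕ} (S : Set (Fin m)) : Setoid (Fin m) :=
  ⟨fun x y => (x ∈ S ↔ y ∈ S),
    ⟨fun _ => Iff.rfl, fun h => h.symm, fun h1 h2 => h1.trans h2⟩⟩

/-- A non-crossing partition that is not `⊤` has a proper interval block. -/
lemma exists_interval_block {m : ℕ} (hm : 1 ≤ m) (τ : Setoid (Fin m))
    (hτ : IsNC τ) (hne : τ ≠ ⊤) :
    ∃ lo hi : Fin m, lo ≤ hi ∧ hi.val - lo.val < m - 1 ∧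
      ∀ x, τ.r lo x ↔ (lo ≤ x ∧ x ≤ hi) := by
  classical
  haveI : Nonempty (Fin m) := ⟨⟨0, hm⟩⟩
  -- choose a block of minimal diameter
  obtain ⟨i₀, -, hmin⟩ := Finset.exists_min_image Finset.univ
    (fun i => ((blockOf τ i).max' (blockOf_nonempty τ i)).val -
              ((blockOf τ i).min' (blockOf_nonempty τ i)).val) Finset.univ_nonempty
  set lo := (blockOf τ i₀).min' (blockOf_nonempty τ i₀) with hlo
  set hi := (blockOf τ i₀).max' (blockOf_nonempty τ i₀) with hhi
  have hrlo : τ.r i₀ lo := mem_blockOf.mp (Finset.min'_mem _ _)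
  have hrhi : τ.r i₀ hi := mem_blockOf.mp (Finset.max'_mem _ _)
  have hlohi : lo ≤ hi := Finset.min'_le _ _ (Finset.max'_mem _ _)
  -- the block of i₀ is the interval [lo, hi]
  have hint : ∀ x : Fin m, lo ≤ x → x ≤ hi → τ.r i₀ x := by
    intro x hlx hxh
    by_contra hnr
    have hlx' : lo < x := lt_of_le_of_ne hlx (by rintro rfl; exact hnr hrlo)
    have hxh' : x < hi := lt_of_le_of_ne hxh (by rintro rfl; exact hnr hrhi)
    have hinside : ∀ y, τ.r x y → lo < y ∧ y < hi := by
      intro y hxy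
      constructor
      · rcases lt_trichotomy y lo with h | h | h
        · exfalso
          have hrel : τ.r y lo := hτ y lo x hi h hlx' hxh' (τ.iseqv.symm hxy)
            (τ.iseqv.trans (τ.iseqv.symm hrlo) hrhi)
          exact hnr (τ.iseqv.trans hrlo (τ.iseqv.trans (τ.iseqv.symm hrel)
            (τ.iseqv.symm hxy)))
        · exfalso; subst h; exact hnr (τ.iseqv.trans hrlo (τ.iseqv.symm hxy))
        · exact h
      · rcases lt_trichotomy hi y with h | h | h
        · exfalso
          have hrel : τ.r lo x := hτ lo x hi y hlx' hxh' h
            (τ.iseqv.trans (τ.iseqv.symm hrlo) hrhi) hxy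
          exact hnr (τ.iseqv.trans hrlo hrel)
        · exfalso; subst h; exact hnr (τ.iseqv.trans hrhi (τ.iseqv.symm hxy))
        · exact h
    -- block of x lies strictly inside (lo, hi): its diameter is smaller
    have hminx := hmin x (Finset.mem_univ x)
    set lox := (blockOf τ x).min' (blockOf_nonempty τ x) with hlox
    set hix := (blockOf τ x).max' (blockOf_nonempty τ x) with hhix
    have h1 : lo < lox := (hinside lox (mem_blockOf.mp (Finset.min'_mem _ _))).1
    have h2 : hix < hi := (hinside hix (mem_blockOf.mp (Finset.max'_mem _ _))).2
    have h3 : lox ≤ hix := Finset.min'_le _ _ (Finset.max'_mem _ _)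
    have h1' : lo.val < lox.val := h1
    have h2' : hix.val < hi.val := h2
    have h3' : lox.val ≤ hix.val := h3
    have hll : lo.val < x.val := hlx'
    have hhh : x.val < hi.val := hxh'
    omega
  have hblock : ∀ x, τ.r lo x ↔ (lo ≤ x ∧ x ≤ hi) := by
    intro x
    constructor
    · intro h
      have hx : x ∈ blockOf τ i₀ := mem_blockOf.mpr (τ.iseqv.trans hrlo h)
      exact ⟨Finset.min'_le _ _ hx, Finset.le_max' _ _ hx⟩
    · rintro ⟨h1, h2⟩
      exact τ.iseqv.trans (τ.iseqv.symm hrlo) (hint x h1 h2)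
  refine ⟨lo, hi, hlohi, ?_, hblock⟩
  by_contra hbig
  push_neg at hbig
  apply hne
  rw [Setoid.eq_top_iff]
  have hall : ∀ x : Fin m, τ.r lo x := by
    intro x
    apply (hblock x).mpr
    have h1 := lo.isLt
    have h2 := hi.isLt
    have h3 := x.isLt
    have hlo0 : lo.val = 0 := by omega
    have hhim : hi.val = m - 1 := by omega
    constructor
    · exact Fin.le_def.mpr (by omega)
    · exact Fin.le_def.mpr (by omega)
  intro x y
  exact τ.iseqv.trans (τ.iseqv.symm (hall x)) (hall y)

lemma meanderMap_dEven {n : ℕ} (π ρ : Setoid (Fin n)) (k : Fin n) :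
    meanderMap π ρ (dEven k) = dOdd (prevP π k) := by
  unfold meanderMap
  rw [if_pos (by simp only [dEven_val]; omega)]
  congr 2
  apply Fin.ext
  simp only [dEven_val]
  omega

lemma meanderMap_dOdd {n : ℕ} (π ρ : Setoid (Fin n)) (k : Fin n) :
    meanderMap π ρ (dOdd k) = dEven (nextP ρ k) := by
  unfold meanderMap
  rw [if_neg (by simp only [dOdd_val]; omega)]
  congr 2
  apply Fin.ext
  simp only [dOdd_val]
  omega

lemma isNC_sideSetoid_interval {m : ℕ} (a b : Fin m) :
    IsNC (sideSetoid {x | a ≤ x ∧ x ≤ b}) := by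
  intro p q r s hpq hqr hrs hpr hqs
  set S : Set (Fin m) := {x | a ≤ x ∧ x ≤ b} with hS
  show p ∈ S ↔ q ∈ S
  have hpr' : p ∈ S ↔ r ∈ S := hpr
  have hqs' : q ∈ S ↔ s ∈ S := hqs
  by_cases hp : p ∈ S
  · have hr : r ∈ S := hpr'.mp hp
    have hq : q ∈ S := ⟨le_trans hp.1 (le_of_lt hpq), le_trans (le_of_lt hqr) hr.2⟩
    exact ⟨fun _ => hq, fun _ => hp⟩
  · constructor
    · intro h; exact absurd h hp
    · intro hq
      exfalso
      have hs : s ∈ S := hqs'.mp hq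
      have hr : r ∈ S := ⟨le_trans hq.1 (le_of_lt hqr), le_trans (le_of_lt hrs) hs.2⟩
      exact hp (hpr'.mpr hr)

end Aux

/-- `M_{π,ρ}` is irreducible iff `A(π) ∨ A(ρ) = 1_{2n}`, join in `NC(2n)`. -/
theorem irreducible_iff_arch_ncJoin_top (n : ℕ) (π ρ : Setoid (Fin n))
    (hπ : IsNC π) (hρ : IsNC ρ) :
    ¬ Reducible π ρ ↔ ncJoin (archSetoid π) (archSetoid ρ) = ⊤ := by
  rcases Nat.eq_zero_or_pos n with hn | hn
  · subst hn
    constructor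
    · intro _
      apply Setoid.eq_top_iff.mpr
      intro x _
      exact absurd x.isLt (by omega)
    · rintro - ⟨a, b, -⟩
      exact absurd a.isLt (by omega)
  constructor
  · -- ¬ Reducible → join = ⊤
    intro hnr
    unfold ncJoin
    rw [sInf_eq_top]
    rintro τ ⟨hNC, h1, h2⟩
    by_contra hne
    obtain ⟨lo, hi, hlohi, hsize, hblk⟩ :=
      exists_interval_block (m := 2*n) (by omega) τ hNC hne
    apply hnr
    refine ⟨lo, hi, hlohi, hsize, ?_⟩
    rintro x ⟨h1x, h2x⟩
    have hrel : τ.r lo x := (hblk x).mpr ⟨h1x, h2x⟩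
    have hstep : τ.r x (meanderMap π ρ x) := rel_meanderMap h1 h2 x
    exact (hblk _).mp (τ.iseqv.trans hrel hstep)
  · -- join = ⊤ → ¬ Reducible
    intro htop
    rintro ⟨a, b, hab, hsize, hinv⟩
    set S : Set (Fin (2*n)) := {x | a ≤ x ∧ x ≤ b} with hSdef
    have hrev := minv_rev (meanderMap_injective π ρ) hinv
    have h1 : archSetoid π ≤ sideSetoid S := by
      apply Setoid.eqvGen_le
      rintro x y ⟨j, rfl, rfl⟩
      have hf : meanderMap π ρ (dEven (nextP π j)) = dOdd j := by
        rw [meanderMap_dEven, prevP_nextP]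
      show dOdd j ∈ S ↔ dEven (nextP π j) ∈ S
      constructor
      · intro h
        apply hrev
        rw [hf]
        exact h
      · intro h
        have := hinv _ h
        rwa [hf] at this
    have h2 : archSetoid ρ ≤ sideSetoid S := by
      apply Setoid.eqvGen_le
      rintro x y ⟨j, rfl, rfl⟩
      have hf : meanderMap π ρ (dOdd j) = dEven (nextP ρ j) := meanderMap_dOdd π ρ j
      show dOdd j ∈ S ↔ dEven (nextP ρ j) ∈ S
      constructor
      · intro h
        have := hinv _ h
        rwa [hf] at this
      · intro h
        apply hrev
        rw [hf]
        exact h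
    have hmem : sideSetoid S ∈ {τ : Setoid (Fin (2*n)) |
        IsNC τ ∧ archSetoid π ≤ τ ∧ archSetoid ρ ≤ τ} :=
      ⟨isNC_sideSetoid_interval a b, h1, h2⟩
    have hle : ncJoin (archSetoid π) (archSetoid ρ) ≤ sideSetoid S := sInf_le hmem
    rw [htop] at hle
    have hSeq : sideSetoid S = ⊤ := le_antisymm le_top hle
    have hall : ∀ x y : Fin (2*n), (sideSetoid S).r x y := by
      intro x y
      rw [hSeq]
      trivial
    have haS : a ∈ S := ⟨le_refl a, hab⟩
    have hab' : a.val ≤ b.val := hab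
    have hb := b.isLt
    rcases Nat.eq_zero_or_pos a.val with ha0 | hapos
    · -- a = 0, so b < 2n-1; the point 2n-1 is outside S
      have hy : (⟨2*n-1, by omega⟩ : Fin (2*n)) ∈ S :=
        (hall a ⟨2*n-1, by omega⟩).mp haS
      have : (2*n-1 : ℕ) ≤ b.val := hy.2
      omega
    · -- a > 0; the point 0 is outside S
      have hy : (⟨0, by omega⟩ : Fin (2*n)) ∈ S :=
        (hall a ⟨0, by omega⟩).mp haS
      have : a.val ≤ 0 := hy.1
      omega
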